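/- Let G = ⊕_p ℤ[1/p] be the direct sum over all primes p of the additive groups of p-adic rationals. Then the cardinality of the automorphism group AddAut(G) is exactly 2^ℵ₀. -/
import Mathlib


open DirectSum

/-- For a prime `p`, the additive subgroup `ℤ[1/p] ⊆ ℚ` of `p`-adic rationals,
consisting of all rationals of the form `m / p ^ n` with `m : ℤ` and `n : ℕ`. -/
def padicRationals (p : ℕ) (hp : p.Prime) : AddSubgroup ℚ where
  carrier := {x : ℚ | ∃ m : ℤ, ∃ n : ℕ, x = (m : ℚ) / (p : ℚ) ^ n}
  zero_mem' := ⟨0, 0, by simp⟩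
  add_mem' := by
    rintro a b ⟨m₁, n₁, rfl⟩ ⟨m₂, n₂, rfl⟩
    have hp0 : (p : ℚ) ≠ 0 := by exact_mod_cast hp.ne_zero
    refine ⟨m₁ * (p : ℤ) ^ n₂ + m₂ * (p : ℤ) ^ n₁, n₁ + n₂, ?_⟩
    push_cast
    rw [pow_add]
    field_simp
  neg_mem' := by
    rintro a ⟨m, n, rfl⟩
    exact ⟨-m, n, by push_cast; ring⟩

open Classical in
/-- The "sign" automorphism of `⊕_p ℤ[1/p]` attached to a set `S` of primes:
negation on components in `S`, the identity elsewhere. -/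
noncomputable def sgnAut (S : Set Nat.Primes) :
    (⨁ (q : Nat.Primes), padicRationals q.1 q.2) ≃+
      (⨁ (q : Nat.Primes), padicRationals q.1 q.2) :=
  DFinsupp.mapRange.addEquiv fun q =>
    if q ∈ S then AddEquiv.neg (padicRationals q.1 q.2) else AddEquiv.refl _

open Classical in
lemma sgnAut_apply (S : Set Nat.Primes)
    (y : ⨁ (q : Nat.Primes), padicRationals q.1 q.2) (q : Nat.Primes) :
    sgnAut S y q = if q ∈ S then -(y q) else y q := by
  unfold sgnAut
  erw [DFinsupp.mapRange.addEquiv_apply, DFinsupp.mapRange_apply]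
  split_ifs <;> rfl

/-- The automorphism group of `G = ⊕_p ℤ[1/p]` has cardinality exactly `2 ^ ℵ₀`. -/
theorem card_addAut_directSum_padicRationals :
    Cardinal.mk (AddAut (⨁ (q : Nat.Primes), padicRationals q.1 q.2)) =
      2 ^ Cardinal.aleph0 := by
  classical
  set G := ⨁ (q : Nat.Primes), padicRationals q.1 q.2 with hG
  haveI : Countable G :=
    inferInstanceAs (Countable (Π₀ q : Nat.Primes, padicRationals q.1 q.2))
  apply le_antisymm
  · calc Cardinal.mk (AddAut G) ≤ Cardinal.mk (G → G) :=
          Cardinal.mk_le_of_injective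
            (f := fun e : AddAut G => (e : G → G))
            (fun a b h => AddEquiv.ext fun x => congrFun h x)
      _ = Cardinal.mk G ^ Cardinal.mk G := (Cardinal.power_def G G).symm
      _ ≤ Cardinal.aleph0 ^ Cardinal.mk G :=
          Cardinal.power_le_power_right Cardinal.mk_le_aleph0
      _ ≤ Cardinal.aleph0 ^ Cardinal.aleph0 :=
          Cardinal.power_le_power_left Cardinal.aleph0_ne_zero Cardinal.mk_le_aleph0
      _ = 2 ^ Cardinal.aleph0 := Cardinal.power_self_eq le_rfl
  · have hx1 : ∀ q : Nat.Primes, ((1 : ℚ) ∈ padicRationals q.1 q.2) :=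
      fun q => ⟨1, 0, by simp⟩
    have inj : Function.Injective fun S : Set Nat.Primes => (sgnAut S : AddAut G) := by
      intro S T h
      ext q
      set x : padicRationals q.1 q.2 := ⟨1, hx1 q⟩ with hxdef
      have happ := congrFun (congrArg (fun e : AddAut G => (e : G → G)) h)
        (DirectSum.of (fun q : Nat.Primes => padicRationals q.1 q.2) q x)
      have hval := congrArg (fun y : G => y q) happ
      simp only at hval
      rw [sgnAut_apply, sgnAut_apply, DirectSum.of_eq_same] at hval
      have hxx : -x ≠ x := by
        intro hc
        have := congrArg (Subtype.val) hc
        norm_num [hxdef] at this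
      constructor <;> intro hq
      · by_contra hq'
        rw [if_pos hq, if_neg hq'] at hval
        exact hxx hval
      · by_contra hq'
        rw [if_neg hq', if_pos hq] at hval
        exact hxx hval.symm
    calc (2 : Cardinal) ^ Cardinal.aleph0
        = 2 ^ Cardinal.mk Nat.Primes := by rw [Cardinal.mk_eq_aleph0 Nat.Primes]
      _ = Cardinal.mk (Set Nat.Primes) := (Cardinal.mk_set).symm
      _ ≤ Cardinal.mk (AddAut G) := Cardinal.mk_le_of_injective inj
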